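/- Let A be a unital associative algebra such that every finitely generated subalgebra is contained in a subalgebra B with B = Z(B) + [B, B]. If every additive commutator of A is central in A, then A is commutative. -/

import Mathlib

/-- The additive subgroup generated by all additive commutators of a ring. -/
def commutatorAddSubgroup (R : Type*) [Ring R] : AddSubgroup R :=
  AddSubgroup.closure {x | ∃ a b : R, x = a * b - b * a}

theorem stmt_8 (F : Type*) [Field F] (A : Type*) [Ring A] [Algebra F A]
    (hloc : ∀ s : Finset A, ∃ B : Subalgebra F A, Algebra.adjoin F (s : Set A) ≤ B ∧
      ∀ x : B, ∃ z ∈ Set.center B, ∃ c ∈ commutatorAddSubgroup B, x = z + c)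
    (hcomm : ∀ x y : A, x * y - y * x ∈ Set.center A) :
    ∀ x y : A, x * y = y * x := by
  classical
  intro x y
  obtain ⟨B, hB, hdec⟩ := hloc {x, y}
  have hx : x ∈ B := hB (Algebra.subset_adjoin (by simp))
  have hy : y ∈ B := hB (Algebra.subset_adjoin (by simp))
  have hcent : ∀ c ∈ commutatorAddSubgroup B, (c : A) ∈ Set.center A := by
    intro c hc
    induction hc using AddSubgroup.closure_induction with
    | mem g hg =>
        obtain ⟨a, b, rfl⟩ := hg
        push_cast
        exact hcomm a b
    | zero => simp
    | add a b _ _ ha hb => push_cast; exact Set.add_mem_center ha hb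
    | neg a _ ha => push_cast; exact Set.neg_mem_center ha
  obtain ⟨z, hz, c, hc, hxe⟩ := hdec ⟨x, hx⟩
  have key : (⟨x, hx⟩ : B) * ⟨y, hy⟩ = ⟨y, hy⟩ * ⟨x, hx⟩ := by
    rw [hxe, add_mul, mul_add]
    congr 1
    · exact ((Set.mem_center_iff.mp hz)).comm _
    · have h := ((Set.mem_center_iff.mp (hcent c hc))).comm y
      exact Subtype.ext (by push_cast; exact h)
  have := congrArg Subtype.val key
  simpa using this
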